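/- Let 2 ≤ s ≤ n - 2 with s = 2d+1, and let F ⊆ 2^[n] be an s-union family. Then |F| ≤ Σ_{i=0}^{d} C(n, i) + C(n-1, d). -/

import Mathlib

open Finset UV

namespace Stmt13Aux

def SU (s : ℕ) (F : Finset (Finset ℕ)) : Prop := ∀ A ∈ F, ∀ B ∈ F, (A ∪ B).card ≤ s

lemma compress_eq_of_moved {i j : ℕ} {A : Finset ℕ} (h : i ∉ A) (h2 : j ∈ A) :
    compress {i} {j} A = insert i (A.erase j) := by
  have hij : i ≠ j := fun e => h (e ▸ h2)
  rw [compress_of_disjoint_of_le (by simpa using h) (by simpa using h2)]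
  ext x
  simp only [Finset.mem_sdiff, Finset.mem_sup, Finset.sup_eq_union, Finset.mem_union,
    Finset.mem_singleton, Finset.mem_insert, Finset.mem_erase]
  constructor
  · rintro ⟨h1 | h1, h2⟩ <;> tauto
  · rintro (rfl | ⟨hx, hxA⟩) <;> tauto

lemma compress_eq_of_not_moved {i j : ℕ} {A : Finset ℕ} (h : ¬(i ∉ A ∧ j ∈ A)) :
    compress {i} {j} A = A := by
  unfold compress
  rw [if_neg]
  intro ⟨h1, h2⟩
  exact h ⟨by simpa using h1, by simpa using h2⟩

lemma card_le_helper {i j : ℕ} {X Y : Finset ℕ} (hj : j ∈ Y) (h : X ⊆ insert i (Y.erase j)) :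
    X.card ≤ Y.card := by
  have h1 := Finset.card_le_card h
  have h2 := Finset.card_insert_le i (Y.erase j)
  have h3 := Finset.card_erase_of_mem hj
  have h4 : 0 < Y.card := Finset.card_pos.2 ⟨j, hj⟩
  omega

lemma compress_union_card {i j : ℕ} (a b : Finset ℕ) :
    (compress {i} {j} a ∪ compress {i} {j} b).card ≤ (a ∪ b).card := by
  by_cases ha : i ∉ a ∧ j ∈ a <;> by_cases hb : i ∉ b ∧ j ∈ b
  · rw [compress_eq_of_moved ha.1 ha.2, compress_eq_of_moved hb.1 hb.2]
    refine card_le_helper (i := i) (Finset.mem_union_left _ ha.2) ?_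
    intro x hx
    simp only [Finset.mem_union, Finset.mem_insert, Finset.mem_erase] at hx ⊢
    tauto
  · rw [compress_eq_of_moved ha.1 ha.2, compress_eq_of_not_moved hb]
    by_cases hjb : j ∈ b
    · have hib : i ∈ b := by tauto
      refine Finset.card_le_card ?_
      intro x hx
      simp only [Finset.mem_union, Finset.mem_insert, Finset.mem_erase] at hx ⊢
      rcases hx with (rfl | ⟨hx1, hx2⟩) | hx
      · exact Or.inr hib
      · tauto
      · tauto
    · refine card_le_helper (i := i) (Finset.mem_union_left _ ha.2) ?_
      intro x hx
      simp only [Finset.mem_union, Finset.mem_insert, Finset.mem_erase] at hx ⊢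
      rcases hx with (rfl | ⟨hx1, hx2⟩) | hx
      · tauto
      · tauto
      · exact Or.inr ⟨fun e => hjb (e ▸ hx), Or.inr hx⟩
  · rw [compress_eq_of_not_moved ha, compress_eq_of_moved hb.1 hb.2]
    by_cases hja : j ∈ a
    · have hia : i ∈ a := by tauto
      refine Finset.card_le_card ?_
      intro x hx
      simp only [Finset.mem_union, Finset.mem_insert, Finset.mem_erase] at hx ⊢
      rcases hx with hx | (rfl | ⟨hx1, hx2⟩)
      · tauto
      · exact Or.inl hia
      · tauto
    · refine card_le_helper (i := i) (Finset.mem_union_right _ hb.2) ?_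
      intro x hx
      simp only [Finset.mem_union, Finset.mem_insert, Finset.mem_erase] at hx ⊢
      rcases hx with hx | (rfl | ⟨hx1, hx2⟩)
      · exact Or.inr ⟨fun e => hja (e ▸ hx), Or.inl hx⟩
      · tauto
      · tauto
  · rw [compress_eq_of_not_moved ha, compress_eq_of_not_moved hb]

lemma su_mixed {s i j : ℕ} {F : Finset (Finset ℕ)} (hF : SU s F) {A b : Finset ℕ}
    (hAF : A ∈ F) (hcAF : compress {i} {j} A ∈ F) (hbF : b ∈ F) :
    (A ∪ compress {i} {j} b).card ≤ s := by
  by_cases hbmv : i ∉ b ∧ j ∈ b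
  · rw [compress_eq_of_moved hbmv.1 hbmv.2]
    by_cases hjA : j ∈ A
    · by_cases hiA : i ∈ A
      · refine le_trans (Finset.card_le_card ?_) (hF A hAF b hbF)
        intro x hx
        simp only [Finset.mem_union, Finset.mem_insert, Finset.mem_erase] at hx ⊢
        rcases hx with hx | (rfl | ⟨hx1, hx2⟩)
        · tauto
        · exact Or.inl hiA
        · tauto
      · rw [compress_eq_of_moved hiA hjA] at hcAF
        have heq : A ∪ insert i (b.erase j) = insert i (A.erase j) ∪ b := by
          ext x
          simp only [Finset.mem_union, Finset.mem_insert, Finset.mem_erase]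
          by_cases hxj : x = j
          · subst hxj; tauto
          · tauto
        rw [heq]
        exact hF _ hcAF b hbF
    · refine le_trans (card_le_helper (i := i) (Finset.mem_union_right _ hbmv.2) ?_)
        (hF A hAF b hbF)
      intro x hx
      simp only [Finset.mem_union, Finset.mem_insert, Finset.mem_erase] at hx ⊢
      rcases hx with hx | (rfl | ⟨hx1, hx2⟩)
      · exact Or.inr ⟨fun e => hjA (e ▸ hx), Or.inl hx⟩
      · tauto
      · tauto
  · rw [compress_eq_of_not_moved hbmv]
    exact hF A hAF b hbF

lemma SU_compression {s i j : ℕ} {F : Finset (Finset ℕ)} (hF : SU s F) :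
    SU s (compression {i} {j} F) := by
  intro A hA B hB
  rw [mem_compression] at hA hB
  rcases hA with ⟨hAF, hcA⟩ | ⟨-, a, haF, rfl⟩ <;>
    rcases hB with ⟨hBF, hcB⟩ | ⟨-, b, hbF, rfl⟩
  · exact hF A hAF B hBF
  · exact su_mixed hF hAF hcA hbF
  · rw [Finset.union_comm]
    exact su_mixed hF hBF hcB haF
  · exact le_trans (compress_union_card a b) (hF a haF b hbF)

def mu (F : Finset (Finset ℕ)) : ℕ := ∑ A ∈ F, ∑ x ∈ A, x

lemma mu_lt {i j : ℕ} (hij : i < j) {F : Finset (Finset ℕ)}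
    (h : compression {i} {j} F ≠ F) : mu (compression {i} {j} F) < mu F := by
  rw [compression] at h ⊢
  have q : ∀ Q ∈ F.filter (fun A => compress {i} {j} A ∉ F), compress {i} {j} Q ≠ Q := by
    simp_rw [mem_filter]
    intro Q hQ h
    rw [h] at hQ
    exact hQ.2 hQ.1
  have uA : F.filter (fun A => compress {i} {j} A ∈ F) ∪
      F.filter (fun A => compress {i} {j} A ∉ F) = F := filter_union_filter_not_eq (p := _) _
  have ne₂ : (F.filter (fun A => compress {i} {j} A ∉ F)).Nonempty := by
    refine nonempty_iff_ne_empty.2 fun z => h ?_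
    rw [filter_image, z, image_empty, union_empty]
    rwa [z, union_empty] at uA
  rw [mu, mu, sum_union compress_disjoint]
  conv_rhs => rw [← uA]
  rw [sum_union (disjoint_filter_filter_not _ _ _), add_lt_add_iff_left, filter_image,
    sum_image compress_injOn]
  refine sum_lt_sum_of_nonempty ne₂ fun A hA => ?_
  have hmv : i ∉ A ∧ j ∈ A := by
    by_contra hc
    exact q A hA (compress_eq_of_not_moved hc)
  rw [compress_eq_of_moved hmv.1 hmv.2, Finset.sum_insert (fun hc => hmv.1 (Finset.mem_of_mem_erase hc))]
  have := Finset.add_sum_erase A (fun x => x) hmv.2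
  omega

lemma exists_shifted (n s : ℕ) : ∀ (m : ℕ) (F : Finset (Finset ℕ)), mu F ≤ m →
    (∀ A ∈ F, A ⊆ Finset.Icc 1 n) → SU s F →
    ∃ G : Finset (Finset ℕ), (∀ A ∈ G, A ⊆ Finset.Icc 1 n) ∧ SU s G ∧ G.card = F.card ∧
      ∀ i j, 1 ≤ i → i < j → j ≤ n → IsCompressed {i} {j} G := by
  intro m
  induction m with
  | zero =>
    intro F hm hg hsu
    by_cases hall : ∀ i j, 1 ≤ i → i < j → j ≤ n → IsCompressed {i} {j} F
    · exact ⟨F, hg, hsu, rfl, hall⟩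
    · push_neg at hall
      obtain ⟨i, j, hi, hij, hj, hnc⟩ := hall
      have := mu_lt hij hnc
      omega
  | succ m ih =>
    intro F hm hg hsu
    by_cases hall : ∀ i j, 1 ≤ i → i < j → j ≤ n → IsCompressed {i} {j} F
    · exact ⟨F, hg, hsu, rfl, hall⟩
    · push_neg at hall
      obtain ⟨i, j, hi, hij, hj, hnc⟩ := hall
      have hlt := mu_lt hij hnc
      have hg' : ∀ A ∈ compression {i} {j} F, A ⊆ Finset.Icc 1 n := by
        intro A hA
        rw [mem_compression] at hA
        rcases hA with ⟨hAF, -⟩ | ⟨-, a, haF, rfl⟩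
        · exact hg A hAF
        · by_cases hmv : i ∉ a ∧ j ∈ a
          · rw [compress_eq_of_moved hmv.1 hmv.2]
            intro x hx
            rcases Finset.mem_insert.1 hx with rfl | hx
            · exact Finset.mem_Icc.2 ⟨hi, le_of_lt (lt_of_lt_of_le hij hj)⟩
            · exact hg a haF (Finset.mem_of_mem_erase hx)
          · rw [compress_eq_of_not_moved hmv]
            exact hg a haF
      obtain ⟨G, h1, h2, h3, h4⟩ := ih (compression {i} {j} F) (by omega) hg'
        (SU_compression hsu)
      exact ⟨G, h1, h2, h3.trans (card_compression _ _ _), h4⟩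

lemma sum_shift (m : ℕ) : ∀ k : ℕ, ∑ i ∈ range (k+1), (m+1).choose i =
    (∑ i ∈ range (k+1), m.choose i) + ∑ i ∈ range k, m.choose i := by
  intro k
  induction k with
  | zero => simp
  | succ k ih =>
    rw [sum_range_succ (f := fun i => (m+1).choose i) (n := k+1), ih, Nat.choose_succ_succ,
      sum_range_succ (f := fun i => m.choose i) (n := k+1),
      sum_range_succ (f := fun i => m.choose i) (n := k)]
    simp only [Nat.succ_eq_add_one]
    omega

lemma base_identity (d : ℕ) :
    (∑ i ∈ range (d+1), (2*d+2).choose i) + (2*d+1).choose d = 2^(2*d+1) := by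
  have h1 : (2*d+2) = (2*d+1) + 1 := rfl
  rw [h1, sum_shift]
  have h2 := Nat.sum_range_choose_halfway d
  have h3 : ∑ i ∈ range (d+1), (2*d+1).choose i =
      (∑ i ∈ range d, (2*d+1).choose i) + (2*d+1).choose d := sum_range_succ _ _
  have h4 : 2^(2*d+1) = 2 * 4^d := by
    rw [pow_succ']
    congr 1
    rw [pow_mul]
    norm_num
  omega

lemma card_le_half {n s : ℕ} (hs : s < n) (F : Finset (Finset ℕ))
    (hg : ∀ A ∈ F, A ⊆ Finset.Icc 1 n) (hsu : SU s F) : 2 * F.card ≤ 2^n := by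
  classical
  set g := Finset.Icc 1 n with hgdef
  have hcard : g.card = n := by simp [hgdef]
  set imF := F.image (fun A => g \ A) with him
  have hdisj : Disjoint F imF := by
    rw [Finset.disjoint_left]
    intro A hA hA'
    rw [him, Finset.mem_image] at hA'
    obtain ⟨B, hB, rfl⟩ := hA'
    have := hsu _ hA B hB
    rw [Finset.sdiff_union_of_subset (hg B hB)] at this
    omega
  have himcard : imF.card = F.card := by
    rw [him]
    apply Finset.card_image_of_injOn
    intro B1 h1 B2 h2 he
    have he' : g \ B1 = g \ B2 := he
    have e1 : g \ (g \ B1) = B1 := Finset.sdiff_sdiff_eq_self (hg B1 h1)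
    have e2 : g \ (g \ B2) = B2 := Finset.sdiff_sdiff_eq_self (hg B2 h2)
    rw [← e1, ← e2, he']
  have hsub : F ∪ imF ⊆ g.powerset := by
    intro A hA
    rw [Finset.mem_powerset]
    rcases Finset.mem_union.1 hA with hA | hA
    · exact hg A hA
    · rw [him, Finset.mem_image] at hA
      obtain ⟨B, hB, rfl⟩ := hA
      exact Finset.sdiff_subset
  have := Finset.card_le_card hsub
  rw [Finset.card_union_of_disjoint hdisj, Finset.card_powerset, hcard, himcard] at this
  omega

lemma d_zero_case (F : Finset (Finset ℕ)) (hsu : SU 1 F) : F.card ≤ 2 := by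
  classical
  by_cases hne : ∃ A ∈ F, A.Nonempty
  · obtain ⟨A0, hA0, hA0ne⟩ := hne
    have hsub : F ⊆ {∅, A0} := by
      intro B hB
      have h1 := hsu A0 hA0 B hB
      have h2 : A0 ⊆ A0 ∪ B := Finset.subset_union_left
      have h3 : B ⊆ A0 ∪ B := Finset.subset_union_right
      have h4 : 1 ≤ A0.card := Finset.card_pos.2 hA0ne
      have h5 : A0 = A0 ∪ B := Finset.eq_of_subset_of_card_le h2 (le_trans h1 h4)
      have h6 : B ⊆ A0 := h5 ▸ h3
      have h7 : A0.card = 1 := le_antisymm (h5 ▸ h1) h4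
      obtain ⟨x, hx⟩ := Finset.card_eq_one.1 h7
      rw [hx] at h6
      rcases Finset.subset_singleton_iff.1 h6 with rfl | rfl
      · exact Finset.mem_insert_self _ _
      · rw [← hx]
        exact Finset.mem_insert_of_mem (Finset.mem_singleton_self _)
    calc F.card ≤ ({∅, A0} : Finset (Finset ℕ)).card := Finset.card_le_card hsub
      _ ≤ 2 := by
        refine le_trans (Finset.card_insert_le _ _) ?_
        simp
  · push_neg at hne
    have hsub : F ⊆ {∅} := by
      intro A hA
      rw [Finset.mem_singleton]
      exact hne A hA
    refine le_trans (Finset.card_le_card hsub) (by simp)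
lemma main : ∀ n : ℕ, ∀ (d : ℕ) (F : Finset (Finset ℕ)),
    (∀ A ∈ F, A ⊆ Finset.Icc 1 n) → SU (2*d+1) F → 2*d+2 ≤ n →
    F.card ≤ (∑ i ∈ range (d+1), n.choose i) + (n-1).choose d := by
  intro n
  induction n using Nat.strong_induction_on with
  | _ n ih =>
  intro d F hg hsu hn
  by_cases hd : d = 0
  · subst hd
    have h2 := d_zero_case F (by simpa using hsu)
    have h3 : (∑ i ∈ range (0+1), n.choose i) = 1 := by simp
    have h4 : (n-1).choose 0 = 1 := Nat.choose_zero_right _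
    omega
  by_cases hbase : n = 2*d+2
  · subst hbase
    have h1 := card_le_half (by omega) F hg hsu
    have h2 := base_identity d
    have h3 : (2:ℕ)^(2*d+2) = 2 * 2^(2*d+1) := by rw [pow_succ]; ring
    have h4 : 2*d+2-1 = 2*d+1 := rfl
    rw [h4]
    omega
  -- main case : n ≥ 2d+3, d ≥ 1
  obtain ⟨m, rfl⟩ : ∃ m, n = m + 1 := ⟨n - 1, by omega⟩
  obtain ⟨e, rfl⟩ : ∃ e, d = e + 1 := ⟨d - 1, by omega⟩
  set d := e + 1 with hdd
  have hm : 2*d+2 ≤ m := by omega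
  obtain ⟨G, hGg, hGsu, hGcard, hGshift⟩ :=
    exists_shifted (m+1) (2*d+1) (mu F) F le_rfl hg hsu
  classical
  set G0 := G.filter (fun A => ¬ (m+1) ∈ A) with hG0
  set G1 := (G.filter (fun A => (m+1) ∈ A)).image (fun A => A.erase (m+1)) with hG1
  have hsplit : G.card = G0.card + G1.card := by
    have h1 : G1.card = (G.filter (fun A => (m+1) ∈ A)).card := by
      rw [hG1]
      apply Finset.card_image_of_injOn
      intro a ha b hb he
      have he' : a.erase (m+1) = b.erase (m+1) := he
      have ha' : (m+1) ∈ a := (Finset.mem_filter.1 ha).2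
      have hb' : (m+1) ∈ b := (Finset.mem_filter.1 hb).2
      rw [← Finset.insert_erase ha', ← Finset.insert_erase hb', he']
    rw [h1]
    rw [add_comm]
    exact (Finset.card_filter_add_card_filter_not _).symm
  -- bound G0
  have hG0g : ∀ A ∈ G0, A ⊆ Finset.Icc 1 m := by
    intro A hA
    have h1 := Finset.mem_filter.1 hA
    intro x hx
    have h2 := hGg A h1.1 hx
    rw [Finset.mem_Icc] at h2 ⊢
    have : x ≠ m+1 := fun e => h1.2 (e ▸ hx)
    omega
  have hG0su : SU (2*d+1) G0 := fun A hA B hB =>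
    hGsu A (Finset.mem_filter.1 hA).1 B (Finset.mem_filter.1 hB).1
  have hb0 := ih m (by omega) d G0 hG0g hG0su (by omega)
  -- bound G1
  have hG1g : ∀ A ∈ G1, A ⊆ Finset.Icc 1 m := by
    intro A hA
    rw [hG1, Finset.mem_image] at hA
    obtain ⟨a, ha, rfl⟩ := hA
    intro x hx
    have h2 := hGg a (Finset.mem_filter.1 ha).1 (Finset.mem_of_mem_erase hx)
    rw [Finset.mem_Icc] at h2 ⊢
    have : x ≠ m+1 := Finset.ne_of_mem_erase hx
    omega
  have hG1su : SU (2*e+1) G1 := by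
    intro A' hA' B' hB'
    rw [hG1, Finset.mem_image] at hA' hB'
    obtain ⟨a, ha, rfl⟩ := hA'
    obtain ⟨b, hb, rfl⟩ := hB'
    have hma : (m+1) ∈ a := (Finset.mem_filter.1 ha).2
    have hmb : (m+1) ∈ b := (Finset.mem_filter.1 hb).2
    have haG : a ∈ G := (Finset.mem_filter.1 ha).1
    have hbG : b ∈ G := (Finset.mem_filter.1 hb).1
    set A' := a.erase (m+1) with hA'd
    set B' := b.erase (m+1) with hB'd
    have hmA' : (m+1) ∉ A' ∪ B' := by
      rw [Finset.mem_union]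
      rintro (h | h) <;> exact (Finset.notMem_erase _ _) h
    have hab : a ∪ b = insert (m+1) (A' ∪ B') := by
      rw [hA'd, hB'd, ← Finset.erase_union_distrib, Finset.insert_erase
        (Finset.mem_union_left _ hma)]
    have hub : (A' ∪ B').card ≤ 2*d := by
      have h1 := hGsu a haG b hbG
      rw [hab, Finset.card_insert_of_notMem hmA'] at h1
      omega
    by_contra hcon
    push_neg at hcon
    have hcard : (A' ∪ B').card = 2*d := by omega
    -- find a point j outside A' ∪ B' within Icc 1 m
    have hsubm : A' ∪ B' ⊆ Finset.Icc 1 m :=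
      Finset.union_subset (hG1g _ (by rw [hG1]; exact Finset.mem_image_of_mem _ ha))
        (hG1g _ (by rw [hG1]; exact Finset.mem_image_of_mem _ hb))
    have hj : ∃ j ∈ Finset.Icc 1 m, j ∉ A' ∪ B' := by
      by_contra hc
      push_neg at hc
      have := Finset.card_le_card hc
      rw [hcard, Nat.card_Icc] at this
      omega
    obtain ⟨j, hjm, hjnot⟩ := hj
    rw [Finset.mem_Icc] at hjm
    -- use shiftedness
    have hcomp := hGshift j (m+1) hjm.1 (by omega) le_rfl
    have hjna : j ∉ a := by
      intro hja
      have : j ∈ A' := Finset.mem_erase.2 ⟨by omega, hja⟩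
      exact hjnot (Finset.mem_union_left _ this)
    have hmoved : compress {j} {m+1} a = insert j A' := by
      rw [compress_of_disjoint_of_le (by simpa using hjna) (by simpa using hma)]
      ext x
      simp only [Finset.mem_sdiff, Finset.sup_eq_union, Finset.mem_union,
        Finset.mem_singleton, Finset.mem_insert, hA'd, Finset.mem_erase]
      constructor
      · rintro ⟨h1 | h1, h2⟩ <;> tauto
      · rintro (rfl | ⟨h1, h2⟩)
        · exact ⟨Or.inr rfl, by omega⟩
        · tauto
    have hca : insert j A' ∈ G := by
      rw [← hmoved, ← hcomp.eq]
      exact compress_mem_compression haG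
    have hfin := hGsu _ hca b hbG
    have heq : insert j A' ∪ b = insert j (insert (m+1) (A' ∪ B')) := by
      ext x
      simp only [Finset.mem_union, Finset.mem_insert, hA'd, hB'd, Finset.mem_erase]
      by_cases hx : x = m+1
      · subst hx; tauto
      · tauto
    rw [heq, Finset.card_insert_of_notMem, Finset.card_insert_of_notMem hmA'] at hfin
    · omega
    · rw [Finset.mem_insert]
      rintro (h | h)
      · omega
      · exact hjnot h
  have hb1 := ih m (by omega) e G1 hG1g hG1su (by omega)
  -- combine
  have hshift := sum_shift m d
  have hpas : m.choose d = (m-1).choose e + (m-1).choose d := by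
    have h1 : m = (m-1) + 1 := by omega
    rw [h1, Nat.choose_succ_succ (m-1) e]
    congr 1
  have hF : F.card = G0.card + G1.card := by rw [← hsplit, hGcard]
  have hfinal : (m+1) - 1 = m := by omega
  rw [hfinal]
  have hde : (∑ i ∈ range d, m.choose i) = ∑ i ∈ range (e+1), m.choose i := rfl
  omega
end Stmt13Aux

theorem stmt_13 (n s d : ℕ) (hs2 : 2 ≤ s) (hsn : s ≤ n - 2) (hsd : s = 2 * d + 1)
    (F : Finset (Finset ℕ))
    (hF : ∀ A ∈ F, A ⊆ Finset.Icc 1 n)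
    (hunion : ∀ A ∈ F, ∀ B ∈ F, (A ∪ B).card ≤ s) :
    F.card ≤ (∑ i ∈ Finset.range (d + 1), n.choose i) + (n - 1).choose d := by
  subst hsd
  have hn : 2 * d + 2 ≤ n := by omega
  exact Stmt13Aux.main n d F hF hunion hn
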